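/- arXiv:2504.21655 — 2 statements merged into one kernel-verified Lean document; each statement's English description precedes it below -/
import Mathlib

section
/- Let t ≥ 2 be an integer and n ≥ 0. The cardinality of O_t^2(n) is at most the cardinality of R_t^2(n); equivalently, there is an injection from O_t^2(n) into R_t^2(n). -/
open Finset
open scoped Classical

/-- `O_t(n)`: the `t`-regular partitions of `n` in which the part 1 appears an odd
number of times. -/
noncomputable def Ot (t n : ℕ) : Finset (Nat.Partition n) :=
  Finset.univ.filter fun p => (∀ x ∈ p.parts, ¬ t ∣ x) ∧ Odd (p.parts.count 1)

/-- `R_t(n)`: the partitions of `n` in which the only multiple of `t` allowed as a part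
is `2t`, and the part `2t + 1` appears at least once. -/
noncomputable def Rt (t n : ℕ) : Finset (Nat.Partition n) :=
  Finset.univ.filter fun p => (∀ x ∈ p.parts, t ∣ x → x = 2 * t) ∧ (2 * t + 1) ∈ p.parts

/-- `O_t^2(n)`: partitions in `O_t(n)` with no part `> 1` congruent to `1 (mod 2t)`,
and largest part at least `8t² + 1`. -/
noncomputable def Ot2 (t n : ℕ) : Finset (Nat.Partition n) :=
  (Ot t n).filter fun p =>
    (∀ x ∈ p.parts, 1 < x → ¬ x ≡ 1 [MOD 2 * t]) ∧ 8 * t ^ 2 + 1 ≤ p.parts.sup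

/-- `R_t^2(n)`: partitions in `R_t(n)` in which 1 appears an even number of times,
`f(2t+1) + f(4t+1) ≥ 2`, and `f(2kt+1) = 0` for all `k ≥ 3`. -/
noncomputable def Rt2 (t n : ℕ) : Finset (Nat.Partition n) :=
  (Rt t n).filter fun p =>
    Even (p.parts.count 1) ∧ 2 ≤ p.parts.count (2 * t + 1) + p.parts.count (4 * t + 1) ∧
      ∀ k, 3 ≤ k → p.parts.count (2 * k * t + 1) = 0

/-! ### Auxiliary material for the proof -/

/-- The number of parts `2t+1` used in the image partition. -/
noncomputable def mOf (t N : ℕ) : ℕ :=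
  if 2 ≤ N % (2 * t) then N % (2 * t) else N % (2 * t) + 2 * t

/-- The number of parts `2t` used in the image partition. -/
noncomputable def cOf (t N : ℕ) : ℕ := (N - mOf t N) / (2 * t) - mOf t N

lemma mOf_two_le (t N : ℕ) (ht : 2 ≤ t) : 2 ≤ mOf t N := by
  unfold mOf; split <;> omega

lemma key (t N : ℕ) (ht : 2 ≤ t) (hN : 8 * t ^ 2 + 2 ≤ N) :
    mOf t N * (2 * t + 1) + cOf t N * (2 * t) = N := by
  have h2t : 0 < 2 * t := by omega
  have hqr : 2 * t * (N / (2 * t)) + N % (2 * t) = N := Nat.div_add_mod N (2 * t)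
  have hr : N % (2 * t) < 2 * t := Nat.mod_lt _ h2t
  set q := N / (2 * t) with hqdef
  set r := N % (2 * t) with hrdef
  clear_value q r
  have ht2 : 8 * t ^ 2 + 2 ≤ 2 * t * q + r := by rw [hqr]; exact hN
  unfold cOf mOf
  rw [← hrdef]
  split_ifs with h
  · have hsub : N - r = 2 * t * q := by omega
    rw [hsub, Nat.mul_div_cancel_left _ h2t]
    have hrq : r ≤ q := by nlinarith
    zify [hrq]
    have hqr' : (2 * t * q + r : ℤ) = N := by exact_mod_cast hqr
    linear_combination hqr'
  · have hq1 : 1 ≤ q := by nlinarith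
    obtain ⟨q', rfl⟩ : ∃ q', q = q' + 1 := ⟨q - 1, by omega⟩
    have hexp : 2 * t * (q' + 1) = 2 * t * q' + 2 * t := by ring
    rw [hexp] at hqr ht2
    have hsub : N - (r + 2 * t) = 2 * t * q' := by omega
    rw [hsub, Nat.mul_div_cancel_left _ h2t]
    have hmq : r + 2 * t ≤ q' := by nlinarith
    zify [hmq]
    have hqr' : (2 * t * q' + 2 * t + r : ℤ) = N := by exact_mod_cast hqr
    linear_combination hqr'

lemma multiset_sup_mem (s : Multiset ℕ) (hs : s ≠ 0) : s.sup ∈ s := by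
  induction s using Multiset.induction with
  | empty => simp at hs
  | cons a s ih =>
    rw [Multiset.sup_cons]
    rcases eq_or_ne s 0 with rfl | h
    · simp
    · rcases le_total a s.sup with hle | hle
      · rw [sup_eq_right.mpr hle]; exact Multiset.mem_cons_of_mem (ih h)
      · rw [sup_eq_left.mpr hle]; exact Multiset.mem_cons_self a s

lemma modeq_one (t a : ℕ) : 2 * t * a + 1 ≡ 1 [MOD 2 * t] :=
  Nat.mul_add_mod (2 * t) a 1

/-- The multiset-level map underlying the injection. -/
noncomputable def gmap (t : ℕ) (s : Multiset ℕ) : Multiset ℕ :=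
  ((s.erase s.sup).erase 1) + Multiset.replicate (mOf t (s.sup + 1)) (2 * t + 1) +
    Multiset.replicate (cOf t (s.sup + 1)) (2 * t)

section Facts

variable {t : ℕ} {s : Multiset ℕ}

/-- All the hypotheses on the parts multiset of a partition in `Ot2`. -/
def OtHyp (t : ℕ) (s : Multiset ℕ) : Prop :=
  (∀ x ∈ s, ¬ t ∣ x) ∧ Odd (s.count 1) ∧
    (∀ x ∈ s, 1 < x → ¬ x ≡ 1 [MOD 2 * t]) ∧ 8 * t ^ 2 + 1 ≤ s.sup

lemma OtHyp.sup_mem (ht : 2 ≤ t) (h : OtHyp t s) : s.sup ∈ s := by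
  apply multiset_sup_mem
  rintro rfl
  have := h.2.2.2
  simp [Multiset.sup_zero] at this

lemma OtHyp.one_lt_sup (ht : 2 ≤ t) (h : OtHyp t s) : 1 < s.sup := by
  have := h.2.2.2; nlinarith

lemma OtHyp.one_mem_erase (ht : 2 ≤ t) (h : OtHyp t s) : 1 ∈ s.erase s.sup := by
  obtain ⟨j, hj⟩ := h.2.1
  rw [← Multiset.count_pos, Multiset.count_erase_of_ne (by have := h.one_lt_sup ht; omega)]
  omega

lemma OtHyp.decomp (ht : 2 ≤ t) (h : OtHyp t s) :
    s = s.sup ::ₘ 1 ::ₘ (s.erase s.sup).erase 1 := by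
  rw [Multiset.cons_erase (h.one_mem_erase ht), Multiset.cons_erase (h.sup_mem ht)]

lemma OtHyp.no_2t (ht : 2 ≤ t) (h : OtHyp t s) : 2 * t ∉ s := fun hm =>
  h.1 _ hm ⟨2, by ring⟩

lemma OtHyp.no_mod (ht : 2 ≤ t) (h : OtHyp t s) (a : ℕ) (ha : 1 ≤ a) :
    2 * t * a + 1 ∉ s := fun hm =>
  h.2.2.1 _ hm (by nlinarith) (modeq_one t a)

lemma OtHyp.no_2t1 (ht : 2 ≤ t) (h : OtHyp t s) : 2 * t + 1 ∉ s := by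
  have := h.no_mod ht 1 le_rfl
  simpa using this

lemma OtHyp.no_4t1 (ht : 2 ≤ t) (h : OtHyp t s) : 4 * t + 1 ∉ s := by
  have := h.no_mod ht 2 (by omega)
  have e : 2 * t * 2 + 1 = 4 * t + 1 := by ring
  rwa [e] at this

lemma erase_le' : (s.erase s.sup).erase 1 ≤ s :=
  le_trans (Multiset.erase_le _ _) (Multiset.erase_le _ _)

lemma mem_of_mem_E {x : ℕ} (hx : x ∈ (s.erase s.sup).erase 1) : x ∈ s :=
  Multiset.mem_of_le erase_le' hx

lemma OtHyp.gmap_sum (ht : 2 ≤ t) (h : OtHyp t s) : (gmap t s).sum = s.sum := by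
  have hN : 8 * t ^ 2 + 2 ≤ s.sup + 1 := by have := h.2.2.2; omega
  have hkey := key t (s.sup + 1) ht hN
  conv_rhs => rw [h.decomp ht]
  rw [gmap]
  rw [Multiset.sum_add, Multiset.sum_add, Multiset.sum_replicate, Multiset.sum_replicate,
    Multiset.sum_cons, Multiset.sum_cons, smul_eq_mul, smul_eq_mul]
  omega

lemma count_E_eq_zero (ht : 2 ≤ t) (h : OtHyp t s) {x : ℕ} (hx : x ∉ s) :
    ((s.erase s.sup).erase 1).count x = 0 := by
  rw [Multiset.count_eq_zero]
  intro hmem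
  exact hx (mem_of_mem_E hmem)

lemma OtHyp.count_gmap_2t1 (ht : 2 ≤ t) (h : OtHyp t s) :
    (gmap t s).count (2 * t + 1) = mOf t (s.sup + 1) := by
  rw [gmap, Multiset.count_add, Multiset.count_add, Multiset.count_replicate,
    Multiset.count_replicate, count_E_eq_zero ht h (h.no_2t1 ht),
    if_pos rfl, if_neg (show ¬ (2 * t = 2 * t + 1) by omega)]
  omega

lemma OtHyp.count_gmap_2t (ht : 2 ≤ t) (h : OtHyp t s) :
    (gmap t s).count (2 * t) = cOf t (s.sup + 1) := by
  rw [gmap, Multiset.count_add, Multiset.count_add, Multiset.count_replicate,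
    Multiset.count_replicate, count_E_eq_zero ht h (h.no_2t ht),
    if_neg (show ¬ (2 * t + 1 = 2 * t) by omega), if_pos rfl]
  omega

lemma OtHyp.gmap_filter (ht : 2 ≤ t) (h : OtHyp t s) :
    (gmap t s).filter (fun x => ¬(x = 2 * t + 1 ∨ x = 2 * t)) =
      (s.erase s.sup).erase 1 := by
  rw [gmap, Multiset.filter_add, Multiset.filter_add]
  rw [Multiset.filter_eq_self.mpr, Multiset.filter_eq_nil.mpr, Multiset.filter_eq_nil.mpr]
  · simp
  · intro a ha
    rw [Multiset.eq_of_mem_replicate ha]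
    simp
  · intro a ha
    rw [Multiset.eq_of_mem_replicate ha]
    simp
  · intro a ha
    push_neg
    constructor
    · intro h21; exact (h.no_2t1 ht) (h21 ▸ mem_of_mem_E ha)
    · intro h2; exact (h.no_2t ht) (h2 ▸ mem_of_mem_E ha)

/-- Injectivity at the multiset level. -/
lemma gmap_inj (ht : 2 ≤ t) {s₁ s₂ : Multiset ℕ} (h₁ : OtHyp t s₁) (h₂ : OtHyp t s₂)
    (heq : gmap t s₁ = gmap t s₂) : s₁ = s₂ := by
  have hm : mOf t (s₁.sup + 1) = mOf t (s₂.sup + 1) := by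
    rw [← h₁.count_gmap_2t1 ht, ← h₂.count_gmap_2t1 ht, heq]
  have hc : cOf t (s₁.sup + 1) = cOf t (s₂.sup + 1) := by
    rw [← h₁.count_gmap_2t ht, ← h₂.count_gmap_2t ht, heq]
  have hN₁ : 8 * t ^ 2 + 2 ≤ s₁.sup + 1 := by have := h₁.2.2.2; omega
  have hN₂ : 8 * t ^ 2 + 2 ≤ s₂.sup + 1 := by have := h₂.2.2.2; omega
  have hsup : s₁.sup = s₂.sup := by
    have k₁ := key t (s₁.sup + 1) ht hN₁
    have k₂ := key t (s₂.sup + 1) ht hN₂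
    rw [hm, hc] at k₁
    omega
  have hE : (s₁.erase s₁.sup).erase 1 = (s₂.erase s₂.sup).erase 1 := by
    rw [← h₁.gmap_filter ht, ← h₂.gmap_filter ht, heq]
  have d1 := h₁.decomp ht
  have d2 := h₂.decomp ht
  rw [hE, hsup] at d1
  exact d1.trans d2.symm

end Facts

lemma mem_Ot2_hyp {t n : ℕ} {p : Nat.Partition n} (hp : p ∈ Ot2 t n) : OtHyp t p.parts := by
  simp only [Ot2, Ot, Finset.mem_filter, Finset.mem_univ, true_and] at hp
  exact ⟨hp.1.1, hp.1.2, hp.2.1, hp.2.2⟩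

/-- The partition-level injection. -/
noncomputable def gpart {n : ℕ} (t : ℕ) (ht : 2 ≤ t) (p : Nat.Partition n)
    (hp : p ∈ Ot2 t n) : Nat.Partition n where
  parts := gmap t p.parts
  parts_pos := by
    intro i hi
    rw [gmap] at hi
    rcases Multiset.mem_add.mp hi with hi | hi
    · rcases Multiset.mem_add.mp hi with hi | hi
      · exact p.parts_pos (mem_of_mem_E hi)
      · rw [Multiset.eq_of_mem_replicate hi]; omega
    · rw [Multiset.eq_of_mem_replicate hi]; omega
  parts_sum := by
    rw [(mem_Ot2_hyp hp).gmap_sum ht, p.parts_sum]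

theorem card_Ot2_le_card_Rt2 (t n : ℕ) (ht : 2 ≤ t) :
    (Ot2 t n).card ≤ (Rt2 t n).card := by
  classical
  apply Finset.card_le_card_of_injOn
    (fun p => if hp : p ∈ Ot2 t n then gpart t ht p hp else p)
  · -- maps into Rt2
    intro p hp
    simp only [Finset.mem_coe] at hp ⊢
    rw [dif_pos hp]
    have h := mem_Ot2_hyp hp
    set s := p.parts with hs
    have hparts : (gpart t ht p hp).parts = gmap t s := rfl
    have hN : 8 * t ^ 2 + 2 ≤ s.sup + 1 := by have := h.2.2.2; omega
    have hm2 : 2 ≤ mOf t (s.sup + 1) := mOf_two_le t _ ht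
    simp only [Rt2, Rt, Finset.mem_filter, Finset.mem_univ, true_and, hparts]
    refine ⟨⟨?_, ?_⟩, ?_, ?_, ?_⟩
    · -- only multiple of t is 2t
      intro x hx hdvd
      rw [gmap] at hx
      rcases Multiset.mem_add.mp hx with hx | hx
      · rcases Multiset.mem_add.mp hx with hx | hx
        · exact absurd hdvd (h.1 _ (mem_of_mem_E hx))
        · rw [Multiset.eq_of_mem_replicate hx] at hdvd ⊢
          exfalso
          have : t ∣ 1 := (Nat.dvd_add_right ⟨2, by ring⟩).mp hdvd
          have := Nat.le_of_dvd one_pos this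
          omega
      · exact Multiset.eq_of_mem_replicate hx
    · -- 2t+1 is a part
      rw [← Multiset.count_pos, h.count_gmap_2t1 ht]
      exact lt_of_lt_of_le two_pos hm2
    · -- even number of 1's
      have c1 : (gmap t s).count 1 = s.count 1 - 1 := by
        rw [gmap, Multiset.count_add, Multiset.count_add, Multiset.count_replicate,
          Multiset.count_replicate, if_neg (by omega), if_neg (by omega),
          Multiset.count_erase_self,
          Multiset.count_erase_of_ne (by have := h.one_lt_sup ht; omega)]
        omega
      rw [c1]
      obtain ⟨j, hj⟩ := h.2.1
      exact ⟨j, by omega⟩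
    · -- at least two parts in {2t+1, 4t+1}
      rw [h.count_gmap_2t1 ht]
      omega
    · -- no parts 2kt+1 for k ≥ 3
      intro k hk
      have hne1 : 2 * k * t + 1 ∉ s := by
        have := h.no_mod ht k (by omega)
        have e : 2 * t * k = 2 * k * t := by ring
        rwa [e] at this
      have hk1 : 2 * k * t + 1 ≠ 2 * t + 1 := by
        have : 2 * t * 3 ≤ 2 * t * k := Nat.mul_le_mul_left _ hk
        have e : 2 * t * k = 2 * k * t := by ring
        omega
      have hk2 : 2 * k * t + 1 ≠ 2 * t := by
        have : 2 * t * 3 ≤ 2 * t * k := Nat.mul_le_mul_left _ hk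
        have e : 2 * t * k = 2 * k * t := by ring
        omega
      rw [gmap, Multiset.count_add, Multiset.count_add, Multiset.count_replicate,
        Multiset.count_replicate, if_neg (fun hh => hk1 hh.symm),
        if_neg (fun hh => hk2 hh.symm), count_E_eq_zero ht h hne1]
  · -- injectivity
    intro p hp q hq hpq
    simp only [Finset.mem_coe] at hp hq
    dsimp only at hpq
    rw [dif_pos hp, dif_pos hq] at hpq
    have : gmap t p.parts = gmap t q.parts := congrArg Nat.Partition.parts hpq
    exact Nat.Partition.ext (gmap_inj ht (mem_Ot2_hyp hp) (mem_Ot2_hyp hq) this)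
end

section
/- Let t ≥ 4 be an integer and n ≥ 0. The cardinality of A_t^3(n) is at most the cardinality of S_t^3(n); equivalently, there is an injection from A_t^3(n) into S_t^3(n). -/
open Finset
open scoped Classical

/-- `A_t(n)`: the `t`-regular partitions of `n` with no part equal to 3 and in which the
part 1 appears a number of times congruent to `-2 (mod 2t)`. -/
noncomputable def At (t n : ℕ) : Finset (Nat.Partition n) :=
  Finset.univ.filter fun p => (∀ x ∈ p.parts, ¬ t ∣ x) ∧ p.parts.count 3 = 0 ∧
    (p.parts.count 1 : ℤ) ≡ -2 [ZMOD (2 * t : ℕ)]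

/-- `S_t(n)`: the `t`-regular partitions of `n` in which the part 1 appears a number of
times congruent to 2 or 4 modulo 6. -/
noncomputable def St (t n : ℕ) : Finset (Nat.Partition n) :=
  Finset.univ.filter fun p => (∀ x ∈ p.parts, ¬ t ∣ x) ∧
    (p.parts.count 1 % 6 = 2 ∨ p.parts.count 1 % 6 = 4)

/-- `A_t^3(n)`: partitions in `A_t(n)` in which `f(1) ≡ 0 (mod 6)`. -/
noncomputable def At3 (t n : ℕ) : Finset (Nat.Partition n) :=
  (At t n).filter fun p => p.parts.count 1 % 6 = 0

/-- `S_t^3(n)`: partitions in `S_t(n)` in which `f(1) ≡ 4 (mod 6)` and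
`f(1) ≡ -4 (mod 2t)`. -/
noncomputable def St3 (t n : ℕ) : Finset (Nat.Partition n) :=
  (St t n).filter fun p => p.parts.count 1 % 6 = 4 ∧
    (p.parts.count 1 : ℤ) ≡ -4 [ZMOD (2 * t : ℕ)]

/-- The map sending a partition with at least two parts equal to 1 to the partition
obtained by removing two 1's and adding a 2. -/
noncomputable def Fmap (n : ℕ) (p : Nat.Partition n) : Nat.Partition n :=
  if h : Multiset.replicate 2 1 ≤ p.parts then
    { parts := 2 ::ₘ (p.parts - Multiset.replicate 2 1),
      parts_pos := by
        intro i hi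
        rcases Multiset.mem_cons.mp hi with rfl | hi
        · norm_num
        · exact p.parts_pos (Multiset.mem_of_le (Multiset.sub_le_self _ _) hi),
      parts_sum := by
        have h2 : (p.parts - Multiset.replicate 2 1) + Multiset.replicate 2 1 = p.parts :=
          tsub_add_cancel_of_le h
        have := congrArg Multiset.sum h2
        rw [Multiset.sum_add, Multiset.sum_replicate, smul_eq_mul] at this
        rw [Multiset.sum_cons]
        have hps := p.parts_sum
        omega }
  else p

theorem card_At3_le_card_St3 (t n : ℕ) (ht : 4 ≤ t) :
    (At3 t n).card ≤ (St3 t n).card := by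
  apply Finset.card_le_card_of_injOn (Fmap n)
  · intro p hp
    simp only [Finset.mem_coe, At3, At, St3, St, Finset.mem_filter, Finset.mem_univ, true_and] at hp ⊢
    obtain ⟨⟨hreg, h3, hmod⟩, h6⟩ := hp
    set c := p.parts.count 1 with hc
    -- c ≥ 2
    have hdvd : ((2 * t : ℕ) : ℤ) ∣ (c : ℤ) + 2 := by
      have := hmod.symm.dvd; simpa using this
    have hc2 : 2 ≤ c := by
      have := Int.le_of_dvd (by omega) hdvd
      omega
    have hle : Multiset.replicate 2 1 ≤ p.parts :=
      Multiset.le_count_iff_replicate_le.mp hc2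
    have hF : Fmap n p = ⟨2 ::ₘ (p.parts - Multiset.replicate 2 1), _, _⟩ := dif_pos hle
    rw [hF]
    have hcount : (2 ::ₘ (p.parts - Multiset.replicate 2 1)).count 1 = c - 2 := by
      rw [Multiset.count_cons_of_ne (by norm_num), Multiset.count_sub,
        Multiset.count_replicate]
      simp [hc]
    have hc6 : 6 ≤ c := by
      -- c ≡ 0 mod 6 and c ≥ 2
      omega
    constructor
    · constructor
      · intro x hx
        rcases Multiset.mem_cons.mp hx with rfl | hx
        · intro hdvd2; have := Nat.le_of_dvd (by norm_num) hdvd2; omega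
        · exact hreg x (Multiset.mem_of_le (Multiset.sub_le_self _ _) hx)
      · right; rw [hcount]; omega
    · refine ⟨by rw [hcount]; omega, ?_⟩
      rw [hcount]
      have : ((c - 2 : ℕ) : ℤ) = (c : ℤ) - 2 := by omega
      rw [this]
      calc (c : ℤ) - 2 ≡ -2 - 2 [ZMOD (2 * t : ℕ)] := hmod.sub_right 2
        _ = -4 := by norm_num
  · intro p hp q hq hpq
    simp only [At3, At, Finset.coe_filter, Set.mem_setOf_eq, Finset.mem_filter,
      Finset.mem_univ, true_and] at hp hq
    have key : ∀ r : Nat.Partition n, (∀ x ∈ r.parts, ¬ t ∣ x) ∧ (r.parts.count 3 = 0 ∧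
        (r.parts.count 1 : ℤ) ≡ -2 [ZMOD (2 * t : ℕ)]) ∧ r.parts.count 1 % 6 = 0 →
        Multiset.replicate 2 1 ≤ r.parts := by
      intro r ⟨_, ⟨_, hmod⟩, _⟩
      apply Multiset.le_count_iff_replicate_le.mp
      have hdvd : ((2 * t : ℕ) : ℤ) ∣ (r.parts.count 1 : ℤ) + 2 := by
        have := hmod.symm.dvd; simpa using this
      have := Int.le_of_dvd (by omega) hdvd
      omega
    have hlep : Multiset.replicate 2 1 ≤ p.parts := key p (by tauto)
    have hleq : Multiset.replicate 2 1 ≤ q.parts := key q (by tauto)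
    have hFp : Fmap n p = ⟨2 ::ₘ (p.parts - Multiset.replicate 2 1), _, _⟩ := dif_pos hlep
    have hFq : Fmap n q = ⟨2 ::ₘ (q.parts - Multiset.replicate 2 1), _, _⟩ := dif_pos hleq
    rw [hFp, hFq] at hpq
    have h1 : 2 ::ₘ (p.parts - Multiset.replicate 2 1)
        = 2 ::ₘ (q.parts - Multiset.replicate 2 1) := congrArg Nat.Partition.parts hpq
    have h2 := (Multiset.cons_inj_right 2).mp h1
    apply Nat.Partition.ext
    calc p.parts = (p.parts - Multiset.replicate 2 1) + Multiset.replicate 2 1 :=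
          (tsub_add_cancel_of_le hlep).symm
      _ = (q.parts - Multiset.replicate 2 1) + Multiset.replicate 2 1 := by rw [h2]
      _ = q.parts := tsub_add_cancel_of_le hleq
end
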